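/- Let W be an M×n array (M ≥ k+1) whose columns W₁,…,W_n satisfy: for every set of k+1 consecutive rows, each word e in a fixed set E of (k+1)-tuples occurs as a column of that (k+1)×n sub-array exactly P(e)·n times, where Σ_{e∈E} P(e) = 1. If ρ is a permutation of [n] such that W_{ρ(j)} is extendable by W_{ρ(j+1)} for all j ∈ [n−1], then in the stitched word w = W_{ρ(1)}||⋯||W_{ρ(n)} of length N = nM − (n−1)k, every e ∈ E occurs as a substring exactly P(e)·n·(M−k) = P(e)·(N−k) times. -/

import Mathlib

/-- Left-associative stitching of a list of words, each stitch overlapping in `k`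
symbols: `u‖v = u ++ (v.drop k)`. -/
def stitchFold {α : Type*} (k : ℕ) (L : List (List α)) : List α :=
  match L with
  | [] => []
  | h :: t => t.foldl (fun acc b => acc ++ b.drop k) h

/-- Let `W` be an `M×n` array (`M ≥ k+1`), given by its columns, such
that in every `(k+1)×n` sub-array of consecutive rows each `(k+1)`-tuple `e ∈ E`
occurs as a column exactly `P(e)·n` times (with `∑_{e∈E} P(e) = 1`).  If `ρ` is a
permutation of `[n]` with each column extendable by the next, then in the stitched
word `w = W_{ρ(1)}‖⋯‖W_{ρ(n)}` of length `N = nM − (n−1)k`, every `e ∈ E` occurs as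
a substring exactly `P(e)·n·(M−k) = P(e)·(N−k)` times. -/
def cnt {α : Type*} [DecidableEq α] (k : ℕ) (e w : List α) : ℕ :=
  ((Finset.range (w.length - k)).filter (fun i => (w.drop i).take (k + 1) = e)).card

lemma foldl_stitch {α : Type*} (k : ℕ) (t : List (List α)) (u : List α) :
    t.foldl (fun acc b => acc ++ b.drop k) u = u ++ (t.map (fun b => b.drop k)).flatten := by
  induction t generalizing u with
  | nil => simp
  | cons b t ih => simp [ih, List.append_assoc]

lemma stitch_cons {α : Type*} (k : ℕ) (a b : List α) (t : List (List α)) (hb : k ≤ b.length) :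
    stitchFold k (a :: b :: t) = a ++ (stitchFold k (b :: t)).drop k := by
  show (b :: t).foldl (fun acc b => acc ++ b.drop k) a
      = a ++ (t.foldl (fun acc b => acc ++ b.drop k) b).drop k
  rw [foldl_stitch, foldl_stitch, List.drop_append_of_le_length hb]
  simp [List.append_assoc]

lemma length_stitch_ge {α : Type*} (k : ℕ) (b : List α) (t : List (List α)) :
    b.length ≤ (stitchFold k (b :: t)).length := by
  show b.length ≤ ((t.foldl (fun acc b => acc ++ b.drop k) b)).length
  rw [foldl_stitch]; simp

lemma cnt_append {α : Type*} [DecidableEq α] (k : ℕ) (e u v : List α) (hu : k ≤ u.length)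
    (hv : k ≤ v.length) (hc : u.drop (u.length - k) = v.take k) :
    cnt k e (u ++ v.drop k) = cnt k e u + cnt k e v := by
  set a := u.length - k with ha
  set b := v.length - k with hb
  have hwa : (u ++ v.drop k).drop a = v := by
    rw [List.drop_append_of_le_length (by omega), hc, List.take_append_drop]
  have hlen : (u ++ v.drop k).length - k = a + b := by
    simp only [List.length_append, List.length_drop]; omega
  unfold cnt
  rw [hlen, Finset.card_filter, Finset.card_filter, Finset.card_filter,
    Finset.sum_range_add]
  congr 1
  · apply Finset.sum_congr rfl
    intro i hi
    rw [Finset.mem_range] at hi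
    congr 1
    rw [List.drop_append_of_le_length (by omega),
      List.take_append_of_le_length (by simp [List.length_drop]; omega)]
  · apply Finset.sum_congr rfl
    intro i hi
    congr 2
    rw [← List.drop_drop, hwa]

lemma cnt_stitch {α : Type*} [DecidableEq α] (k : ℕ) (e : List α) (L : List (List α))
    (hl : ∀ x ∈ L, k ≤ x.length)
    (hch : List.Chain' (fun x y : List α => x.drop (x.length - k) = y.take k) L) :
    cnt k e (stitchFold k L) = (L.map (cnt k e)).sum := by
  induction L with
  | nil => simp [stitchFold, cnt]
  | cons a t ih =>
    match t with
    | [] => simp [stitchFold]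
    | b :: t' =>
      rw [List.Chain', List.isChain_cons_cons] at hch
      have hb : k ≤ b.length := hl b (by simp)
      have htake : (stitchFold k (b :: t')).take k = b.take k := by
        show (t'.foldl (fun acc b => acc ++ b.drop k) b).take k = b.take k
        rw [foldl_stitch, List.take_append_of_le_length hb]
      rw [stitch_cons k a b t' hb,
        cnt_append k e a (stitchFold k (b :: t')) (hl a (by simp))
          (le_trans hb (length_stitch_ge k b t')) (by rw [htake]; exact hch.1),
        ih (fun x hx => hl x (by simp [hx])) hch.2]
      simp

theorem stmt7 {α : Type*} [DecidableEq α] (k M n : ℕ) (hn : 1 ≤ n) (hM : k + 1 ≤ M)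
    (E : Finset (List α)) (hEl : ∀ e ∈ E, e.length = k + 1)
    (P : List α → ℝ) (hsum : ∑ e ∈ E, P e = 1)
    (W : Fin n → List α) (hlen : ∀ j, (W j).length = M)
    (hA2 : ∀ r, r + (k + 1) ≤ M → ∀ e ∈ E,
      ((Finset.univ.filter
          (fun j : Fin n => ((W j).drop r).take (k + 1) = e)).card : ℝ) = P e * n)
    (ρ : Equiv.Perm (Fin n))
    (hext : ∀ j : Fin n, ∀ h : (j : ℕ) + 1 < n,
      (W (ρ j)).drop (M - k) = (W (ρ ⟨(j : ℕ) + 1, h⟩)).take k) :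
    ∀ e ∈ E,
      (((Finset.range ((stitchFold k (List.ofFn fun j => W (ρ j))).length - k)).filter
          (fun i => ((stitchFold k (List.ofFn fun j => W (ρ j))).drop i).take (k + 1)
            = e)).card : ℝ)
        = P e * n * ((M : ℝ) - k) ∧
      P e * n * ((M : ℝ) - k) = P e * (((n * M - (n - 1) * k : ℕ) : ℝ) - k) := by
  intro e he
  constructor
  · set L := List.ofFn (fun j : Fin n => W (ρ j)) with hL
    have hlx : ∀ x ∈ L, k ≤ x.length := by
      intro x hx
      rw [hL, List.mem_ofFn] at hx
      obtain ⟨j, rfl⟩ := hx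
      rw [hlen]; omega
    have hch : List.Chain' (fun x y : List α => x.drop (x.length - k) = y.take k) L := by
      rw [hL, List.Chain', List.isChain_iff_getElem]
      simp only [List.length_ofFn, List.get_ofFn, List.getElem_ofFn]
      intro i hi
      rw [hlen]
      exact hext ⟨i, by omega⟩ (by simp; omega)
    have hcnt : cnt k e (stitchFold k L) = (L.map (cnt k e)).sum :=
      cnt_stitch k e L hlx hch
    show ((cnt k e (stitchFold k L) : ℕ) : ℝ) = P e * n * ((M : ℝ) - k)
    rw [hcnt, hL, List.map_ofFn, List.sum_ofFn]
    push_cast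
    simp only [Function.comp]
    have hcol : ∀ j : Fin n, ((cnt k e (W (ρ j)) : ℕ) : ℝ)
        = ∑ r ∈ Finset.range (M - k),
            (if ((W (ρ j)).drop r).take (k + 1) = e then (1 : ℝ) else 0) := by
      intro j
      unfold cnt
      rw [hlen, Finset.card_filter]
      push_cast
      rfl
    rw [Finset.sum_congr rfl (fun j _ => hcol j), Finset.sum_comm]
    have hrow : ∀ r ∈ Finset.range (M - k),
        (∑ j : Fin n, (if ((W (ρ j)).drop r).take (k + 1) = e then (1 : ℝ) else 0))
          = P e * n := by
      intro r hr
      rw [Finset.mem_range] at hr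
      rw [← hA2 r (by omega) e he, Finset.card_filter]
      push_cast
      exact Fintype.sum_equiv ρ _ _ (fun j => rfl)
    rw [Finset.sum_congr rfl hrow, Finset.sum_const, Finset.card_range, nsmul_eq_mul]
    rw [Nat.cast_sub (by omega)]
    ring
  · have h1 : (n - 1) * k ≤ n * M := by
      have : (n - 1) * k ≤ n * k := Nat.mul_le_mul_right k (by omega)
      have : n * k ≤ n * M := Nat.mul_le_mul_left n (by omega)
      omega
    rw [Nat.cast_sub h1, Nat.cast_mul, Nat.cast_mul, Nat.cast_sub hn]
    push_cast
    ring
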